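/- Let G be a group and P_G a conjugation-closed submonoid, with N_G the unit group of P_G. Consider the pullback G ×_{G/N_G} H of the quotient map η_G : G → G/N_G along any group homomorphism f : H → G/N_G, where H carries a conjugation-closed submonoid P_H with image landing in the image of P_G, so the pullback carries cone P_G ×_{P_G/N_G} P_H. Then the second projection p₂ : G ×_{G/N_G} H → H is surjective, its restriction to cones P_G ×_{P̄_G} P_H → P_H is surjective, and its kernel is N_G × {0} with total cone; consequently, the induced map on quotients by unit groups (G ×_{G/N_G} H)/N → H/N_H is an isomorphism. -/
import Mathlib


/-- Key computation for stable units. Given a preordered group `(G, P)`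
with unit group `N_G`, and any morphism `f : (H, P_H) → (G ⧸ N_G, P̄)`, for the pullback
`G ×_{G ⧸ N_G} H` (with cone `P ×_{P̄} P_H`): the second projection is surjective, its
restriction to cones is surjective, its kernel is `N_G × {0}` with total cone, and the
induced map on quotients by unit groups is an isomorphism. -/
theorem stmt_18 (G H : Type*) [AddGroup G] [AddGroup H]
    (P : AddSubmonoid G)
    (hconjG : ∀ g : G, ∀ p ∈ P, g + p - g ∈ P)
    (NG : AddSubgroup G) [NG.Normal] (hNG : ∀ x : G, x ∈ NG ↔ x ∈ P ∧ -x ∈ P)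
    (PH : AddSubmonoid H)
    (hconjH : ∀ h : H, ∀ q ∈ PH, h + q - h ∈ PH)
    (NH : AddSubgroup H) [NH.Normal] (hNH : ∀ y : H, y ∈ NH ↔ y ∈ PH ∧ -y ∈ PH)
    (f : H →+ G ⧸ NG)
    -- the cone of `H` is sent into the image of `P`:
    (hcone : ∀ q ∈ PH, ∃ p ∈ P, QuotientAddGroup.mk' NG p = f q) :
    -- (a) the second projection of the pullback is surjective:
    (∀ h : H, ∃ g : G, QuotientAddGroup.mk' NG g = f h) ∧
    -- (b) its restriction to the cones is surjective:
    (∀ h ∈ PH, ∃ g ∈ P, QuotientAddGroup.mk' NG g = f h) ∧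
    -- (c) its kernel is `N_G × {0}`, with total cone:
    (∀ (g : G) (h : H), QuotientAddGroup.mk' NG g = f h → h = 0 →
      g ∈ NG ∧ g ∈ P) ∧
    -- (d) the induced map on quotients by the unit groups is surjective and injective:
    (∀ h : H, ∃ x : G × H,
      QuotientAddGroup.mk' NG x.1 = f x.2 ∧ x.2 - h ∈ NH) ∧
    (∀ x y : G × H,
      QuotientAddGroup.mk' NG x.1 = f x.2 → QuotientAddGroup.mk' NG y.1 = f y.2 →
      x.2 - y.2 ∈ NH → x.1 - y.1 ∈ NG) := by
  have hNGP : ∀ x ∈ NG, x ∈ P := fun x hx => ((hNG x).mp hx).1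
  have hker : ∀ x : G, QuotientAddGroup.mk' NG x = 0 → x ∈ NG := by
    intro x hx
    rwa [← QuotientAddGroup.ker_mk' NG]
  have hfNH : ∀ n ∈ NH, f n = 0 := by
    intro n hn
    obtain ⟨hn1, hn2⟩ := (hNH n).mp hn
    obtain ⟨p, hp, hfp⟩ := hcone n hn1
    obtain ⟨p', hp', hfp'⟩ := hcone (-n) hn2
    have hsum : QuotientAddGroup.mk' NG (p + p') = 0 := by
      rw [map_add, hfp, hfp', ← map_add, add_neg_cancel, map_zero]
    have hmem : p + p' ∈ NG := hker _ hsum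
    have hnegp : -p ∈ P := by
      have : p' + -(p + p') ∈ P := P.add_mem hp' ((hNG _).mp hmem).2
      simpa [neg_add_rev, ← add_assoc] using this
    have : p ∈ NG := (hNG p).mpr ⟨hp, hnegp⟩
    rw [← hfp]
    simpa [QuotientAddGroup.eq_zero_iff] using this
  refine ⟨fun h => QuotientAddGroup.mk'_surjective NG (f h), hcone, ?_, ?_, ?_⟩
  · intro g h hg h0
    subst h0
    have : g ∈ NG := hker g (by simpa using hg)
    exact ⟨this, hNGP g this⟩
  · intro h
    obtain ⟨g, hg⟩ := QuotientAddGroup.mk'_surjective NG (f h)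
    exact ⟨(g, h), hg, by simpa using NH.zero_mem⟩
  · intro x y hx hy hxy
    apply hker
    rw [map_sub, hx, hy, ← map_sub, hfNH _ hxy]
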